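/- arXiv:2210.09006 — 3 statements merged into one kernel-verified Lean document; each statement's English description precedes it below -/
import Mathlib

section
/- Define the convolution on M_n(ℂ) ⊗ M_n(ℂ) by x * y := F⁻¹(F(y)F(x)) with F(E_{kℓ} ⊗ E_{pq}) = E_{ℓq} ⊗ E_{kp}. If x and y are positive semidefinite elements of M_n(ℂ) ⊗ M_n(ℂ), then x * y is positive semidefinite (Schur product theorem for this convolution). -/
open Matrix
open scoped Kronecker ComplexOrder

private lemma stmt7_sum_aux (n : ℕ) (A B : Matrix (Fin n × Fin n) (Fin n × Fin n) ℂ)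
    (a b c d : Fin n) :
    ∑ ef : Fin n × Fin n,
      (∑ h, (starRingEnd ℂ) (B h (a, ef.2)) * B h (c, ef.1)) *
      (∑ g, (starRingEnd ℂ) (A g (ef.2, b)) * A g (ef.1, d))
    = ∑ gh : (Fin n × Fin n) × (Fin n × Fin n),
        (starRingEnd ℂ) (∑ f, B gh.2 (a, f) * A gh.1 (f, b)) *
        (∑ e, B gh.2 (c, e) * A gh.1 (e, d)) := by
  have L : (∑ ef : Fin n × Fin n,
      (∑ h, (starRingEnd ℂ) (B h (a, ef.2)) * B h (c, ef.1)) *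
      (∑ g, (starRingEnd ℂ) (A g (ef.2, b)) * A g (ef.1, d)))
      = ∑ p : (Fin n × Fin n) × ((Fin n × Fin n) × (Fin n × Fin n)),
          (starRingEnd ℂ) (B p.2.1 (a, p.1.2)) * B p.2.1 (c, p.1.1) *
          ((starRingEnd ℂ) (A p.2.2 (p.1.2, b)) * A p.2.2 (p.1.1, d)) := by
    rw [Fintype.sum_prod_type (f := fun p : (Fin n × Fin n) × ((Fin n × Fin n) × (Fin n × Fin n)) =>
      (starRingEnd ℂ) (B p.2.1 (a, p.1.2)) * B p.2.1 (c, p.1.1) *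
          ((starRingEnd ℂ) (A p.2.2 (p.1.2, b)) * A p.2.2 (p.1.1, d)))]
    refine Finset.sum_congr rfl fun ef _ => ?_
    rw [Finset.sum_mul]
    simp only [Finset.mul_sum]
    rw [Fintype.sum_prod_type (f := fun hg : (Fin n × Fin n) × (Fin n × Fin n) =>
      (starRingEnd ℂ) (B hg.1 (a, ef.2)) * B hg.1 (c, ef.1) *
          ((starRingEnd ℂ) (A hg.2 (ef.2, b)) * A hg.2 (ef.1, d)))]
  have R : (∑ gh : (Fin n × Fin n) × (Fin n × Fin n),
        (starRingEnd ℂ) (∑ f, B gh.2 (a, f) * A gh.1 (f, b)) *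
        (∑ e, B gh.2 (c, e) * A gh.1 (e, d)))
      = ∑ q : ((Fin n × Fin n) × (Fin n × Fin n)) × (Fin n × Fin n),
          (starRingEnd ℂ) (B q.1.2 (a, q.2.1)) * (starRingEnd ℂ) (A q.1.1 (q.2.1, b)) *
          ((B q.1.2 (c, q.2.2)) * A q.1.1 (q.2.2, d)) := by
    rw [Fintype.sum_prod_type (f := fun q : ((Fin n × Fin n) × (Fin n × Fin n)) × (Fin n × Fin n) =>
      (starRingEnd ℂ) (B q.1.2 (a, q.2.1)) * (starRingEnd ℂ) (A q.1.1 (q.2.1, b)) *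
          ((B q.1.2 (c, q.2.2)) * A q.1.1 (q.2.2, d)))]
    refine Finset.sum_congr rfl fun gh _ => ?_
    rw [map_sum, Finset.sum_mul]
    simp only [Finset.mul_sum]
    rw [Fintype.sum_prod_type (f := fun fe : Fin n × Fin n =>
      (starRingEnd ℂ) (B gh.2 (a, fe.1)) * (starRingEnd ℂ) (A gh.1 (fe.1, b)) *
          ((B gh.2 (c, fe.2)) * A gh.1 (fe.2, d)))]
    exact Finset.sum_congr rfl fun f _ => Finset.sum_congr rfl fun e _ => by
      rw [map_mul (starRingEnd ℂ)]; try ring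
  rw [L, R]
  exact Fintype.sum_equiv
    ⟨fun p => ((p.2.2, p.2.1), (p.1.2, p.1.1)), fun q => ((q.2.2, q.2.1), (q.1.2, q.1.1)),
      fun p => rfl, fun q => rfl⟩ _ _
    (fun p => by simp only [Equiv.coe_fn_mk]; ring)

/-- Schur product theorem for the convolution: if `x` and `y` are positive
semidefinite elements of `Mₙ(ℂ) ⊗ Mₙ(ℂ)`, then so is `x * y := F⁻¹(F(y)F(x))`. -/
theorem stmt7 (n : ℕ)
    (F G : Matrix (Fin n × Fin n) (Fin n × Fin n) ℂ →ₗ[ℂ]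
      Matrix (Fin n × Fin n) (Fin n × Fin n) ℂ)
    (hF : ∀ k l p q : Fin n,
      F (single k l (1 : ℂ) ⊗ₖ single p q (1 : ℂ)) =
        single l q (1 : ℂ) ⊗ₖ single k p (1 : ℂ))
    (hG : ∀ k l p q : Fin n,
      G (single k l (1 : ℂ) ⊗ₖ single p q (1 : ℂ)) =
        single p k (1 : ℂ) ⊗ₖ single q l (1 : ℂ))
    (x y : Matrix (Fin n × Fin n) (Fin n × Fin n) ℂ)
    (hx : x.PosSemidef) (hy : y.PosSemidef) :
    (G (F y * F x)).PosSemidef := by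
  classical
  have hk : ∀ k l p q : Fin n,
      (single k l (1:ℂ) ⊗ₖ single p q (1:ℂ)) =
        single ((k,p) : Fin n × Fin n) ((l,q) : Fin n × Fin n) (1:ℂ) := by
    intro k l p q
    ext ⟨a,b⟩ ⟨c,d⟩
    simp [Matrix.single, Prod.ext_iff]
    aesop
  have hF1 : ∀ k l p q : Fin n,
      F (single ((k,p) : Fin n × Fin n) ((l,q) : Fin n × Fin n) (1:ℂ)) =
        single ((l,k) : Fin n × Fin n) ((q,p) : Fin n × Fin n) (1:ℂ) := by
    intro k l p q; rw [← hk, ← hk, hF]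
  have hG1 : ∀ k l p q : Fin n,
      G (single ((k,p) : Fin n × Fin n) ((l,q) : Fin n × Fin n) (1:ℂ)) =
        single ((p,q) : Fin n × Fin n) ((k,l) : Fin n × Fin n) (1:ℂ) := by
    intro k l p q; rw [← hk, ← hk, hG]
  -- entrywise description of F
  have hF' : ∀ (z : Matrix (Fin n × Fin n) (Fin n × Fin n) ℂ) (r s : Fin n × Fin n),
      F z r s = z (r.2, s.2) (r.1, s.1) := by
    rintro z ⟨a,b⟩ ⟨c,d⟩
    nth_rewrite 1 [Matrix.matrix_eq_sum_single z]
    simp only [map_sum]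
    have key : ∀ (i j : Fin n × Fin n), F (single i j (z i j)) =
        z i j • single ((j.1, i.1) : Fin n × Fin n) ((j.2, i.2) : Fin n × Fin n) (1:ℂ) := by
      rintro ⟨k,p⟩ ⟨l,q⟩
      rw [show single ((k,p) : Fin n × Fin n) ((l,q) : Fin n × Fin n) (z (k,p) (l,q))
          = z (k,p) (l,q) • single ((k,p) : Fin n × Fin n) ((l,q) : Fin n × Fin n) (1:ℂ) by
        rw [Matrix.smul_single]; simp, F.map_smul, hF1]
    simp only [key, Matrix.sum_apply, Matrix.smul_apply, smul_eq_mul]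
    rw [Finset.sum_eq_single ((b,d) : Fin n × Fin n)]
    · rw [Finset.sum_eq_single ((a,c) : Fin n × Fin n)]
      · simp [Matrix.single]
      · intro j _ hj
        simp only [Matrix.single, Matrix.of_apply, Prod.mk.injEq, mul_ite, mul_one, mul_zero]
        rw [if_neg]
        rintro ⟨⟨h1,-⟩,⟨h2,-⟩⟩
        exact hj (Prod.ext h1 h2)
      · simp
    · intro i _ hi
      apply Finset.sum_eq_zero
      intro j _
      simp only [Matrix.single, Matrix.of_apply, Prod.mk.injEq, mul_ite, mul_one, mul_zero]
      rw [if_neg]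
      rintro ⟨⟨-,h1⟩,⟨-,h2⟩⟩
      exact hi (Prod.ext h1 h2)
    · simp
  -- entrywise description of G
  have hG' : ∀ (z : Matrix (Fin n × Fin n) (Fin n × Fin n) ℂ) (r s : Fin n × Fin n),
      G z r s = z (s.1, r.1) (s.2, r.2) := by
    rintro z ⟨a,b⟩ ⟨c,d⟩
    nth_rewrite 1 [Matrix.matrix_eq_sum_single z]
    simp only [map_sum]
    have key : ∀ (i j : Fin n × Fin n), G (single i j (z i j)) =
        z i j • single ((i.2, j.2) : Fin n × Fin n) ((i.1, j.1) : Fin n × Fin n) (1:ℂ) := by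
      rintro ⟨k,p⟩ ⟨l,q⟩
      rw [show single ((k,p) : Fin n × Fin n) ((l,q) : Fin n × Fin n) (z (k,p) (l,q))
          = z (k,p) (l,q) • single ((k,p) : Fin n × Fin n) ((l,q) : Fin n × Fin n) (1:ℂ) by
        rw [Matrix.smul_single]; simp, G.map_smul, hG1]
    simp only [key, Matrix.sum_apply, Matrix.smul_apply, smul_eq_mul]
    rw [Finset.sum_eq_single ((c,a) : Fin n × Fin n)]
    · rw [Finset.sum_eq_single ((d,b) : Fin n × Fin n)]
      · simp [Matrix.single]
      · intro j _ hj
        simp only [Matrix.single, Matrix.of_apply, Prod.mk.injEq, mul_ite, mul_one, mul_zero]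
        rw [if_neg]
        rintro ⟨⟨-,h1⟩,⟨-,h2⟩⟩
        exact hj (Prod.ext h2 h1)
      · simp
    · intro i _ hi
      apply Finset.sum_eq_zero
      intro j _
      simp only [Matrix.single, Matrix.of_apply, Prod.mk.injEq, mul_ite, mul_one, mul_zero]
      rw [if_neg]
      rintro ⟨⟨h1,-⟩,⟨h2,-⟩⟩
      exact hi (Prod.ext h2 h1)
    · simp
  obtain ⟨A, hA⟩ : ∃ A : Matrix (Fin n × Fin n) (Fin n × Fin n) ℂ, x = Aᴴ * A := by
    open scoped MatrixOrder in exact CStarAlgebra.nonneg_iff_eq_star_mul_self.mp hx.nonneg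
  obtain ⟨B, hB⟩ : ∃ B : Matrix (Fin n × Fin n) (Fin n × Fin n) ℂ, y = Bᴴ * B := by
    open scoped MatrixOrder in exact CStarAlgebra.nonneg_iff_eq_star_mul_self.mp hy.nonneg
  set C : Matrix ((Fin n × Fin n) × (Fin n × Fin n)) (Fin n × Fin n) ℂ :=
    Matrix.of fun gh ab => ∑ f, B gh.2 (ab.1, f) * A gh.1 (f, ab.2) with hCdef
  have key : G (F y * F x) = Cᴴ * C := by
    ext ⟨a,b⟩ ⟨c,d⟩
    rw [hG', Matrix.mul_apply, Matrix.mul_apply]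
    simp only [hF', hCdef, Matrix.conjTranspose_apply, Matrix.of_apply, hA, hB,
      Matrix.mul_apply, RCLike.star_def]
    exact stmt7_sum_aux n A B a b c d
  rw [key]
  exact Matrix.posSemidef_conjTranspose_mul_self C
end

section
/- Define the convolution on M_n(ℂ) ⊗ M_n(ℂ) by x * y := F⁻¹(F(y)F(x)) with F(E_{kℓ} ⊗ E_{pq}) = E_{ℓq} ⊗ E_{kp}. Then (x * y)* = (x*) * (y*) for all x, y ∈ M_n(ℂ) ⊗ M_n(ℂ), where * on single elements denotes the conjugate transpose. -/
open Matrix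
open scoped Kronecker

lemma kron_std (n : ℕ) (k l p q : Fin n) :
    (Matrix.single k l (1 : ℂ) ⊗ₖ Matrix.single p q (1 : ℂ)) =
      Matrix.single ((k, p) : Fin n × Fin n) (l, q) (1 : ℂ) := by
  ext ⟨a, b⟩ ⟨c, d⟩
  simp only [kroneckerMap_apply, Matrix.single, of_apply, Prod.mk.injEq]
  by_cases h1 : k = a <;> by_cases h2 : l = c <;> by_cases h3 : p = b <;>
    by_cases h4 : q = d <;> simp [h1, h2, h3, h4]

lemma entry_eq (n : ℕ)
    (L : Matrix (Fin n × Fin n) (Fin n × Fin n) ℂ →ₗ[ℂ]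
      Matrix (Fin n × Fin n) (Fin n × Fin n) ℂ)
    (f g : (Fin n × Fin n) → (Fin n × Fin n) → (Fin n × Fin n))
    (hL : ∀ a b : Fin n × Fin n, L (Matrix.single a b (1 : ℂ)) =
      Matrix.single (f a b) (g a b) (1 : ℂ))
    (hinj : ∀ a b a' b' : Fin n × Fin n, f a b = f a' b' → g a b = g a' b' → a = a' ∧ b = b')
    (M : Matrix (Fin n × Fin n) (Fin n × Fin n) ℂ) (i j : Fin n × Fin n)
    (a₀ b₀ : Fin n × Fin n) (ha : f a₀ b₀ = i) (hb : g a₀ b₀ = j) :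
    L M i j = M a₀ b₀ := by
  conv_lhs => rw [matrix_eq_sum_single M]
  simp only [map_sum, Matrix.sum_apply]
  have hs : ∀ a b : Fin n × Fin n,
      L (Matrix.single a b (M a b)) i j =
        M a b * Matrix.single (f a b) (g a b) (1 : ℂ) i j := by
    intro a b
    have h1 : Matrix.single a b (M a b) = M a b • Matrix.single a b (1 : ℂ) := by simp
    rw [h1, L.map_smul, Matrix.smul_apply, hL]
    rfl
  simp only [hs]
  rw [Finset.sum_eq_single a₀]
  · rw [Finset.sum_eq_single b₀]
    · simp [ha, hb]
    · intro b _ hbne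
      have : ¬(f a₀ b = i ∧ g a₀ b = j) := by
        rintro ⟨h1, h2⟩
        exact hbne (hinj a₀ b a₀ b₀ (h1.trans ha.symm) (h2.trans hb.symm)).2
      rw [Matrix.single_apply_of_ne, mul_zero]
      tauto
    · simp
  · intro a _ hane
    apply Finset.sum_eq_zero
    intro b _
    have : ¬(f a b = i ∧ g a b = j) := by
      rintro ⟨h1, h2⟩
      exact hane (hinj a b a₀ b₀ (h1.trans ha.symm) (h2.trans hb.symm)).1
    rw [Matrix.single_apply_of_ne, mul_zero]
    tauto
  · simp

/-- The convolution `x * y := F⁻¹(F(y)F(x))` is compatible with adjoints: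
`(x * y)* = (x*) * (y*)`. -/
theorem stmt8 (n : ℕ)
    (F G : Matrix (Fin n × Fin n) (Fin n × Fin n) ℂ →ₗ[ℂ]
      Matrix (Fin n × Fin n) (Fin n × Fin n) ℂ)
    (hF : ∀ k l p q : Fin n,
      F (Matrix.single k l (1 : ℂ) ⊗ₖ Matrix.single p q (1 : ℂ)) =
        Matrix.single l q (1 : ℂ) ⊗ₖ Matrix.single k p (1 : ℂ))
    (hG : ∀ k l p q : Fin n,
      G (Matrix.single k l (1 : ℂ) ⊗ₖ Matrix.single p q (1 : ℂ)) =
        Matrix.single p k (1 : ℂ) ⊗ₖ Matrix.single q l (1 : ℂ))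
    (x y : Matrix (Fin n × Fin n) (Fin n × Fin n) ℂ) :
    (G (F y * F x))ᴴ = G (F yᴴ * F xᴴ) := by
  have hF' : ∀ (M : Matrix (Fin n × Fin n) (Fin n × Fin n) ℂ) (i j : Fin n × Fin n),
      F M i j = M (i.2, j.2) (i.1, j.1) := by
    intro M i j
    refine entry_eq n F (fun a b => (b.1, a.1)) (fun a b => (b.2, a.2)) ?_ ?_ M i j
      (i.2, j.2) (i.1, j.1) rfl rfl
    · intro a b
      have h := hF a.1 b.1 a.2 b.2
      rw [kron_std, kron_std] at h
      exact h
    · intro a b a' b' h1 h2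
      simp only [Prod.mk.injEq] at h1 h2
      exact ⟨Prod.ext h1.2 h2.2, Prod.ext h1.1 h2.1⟩
  have hG' : ∀ (M : Matrix (Fin n × Fin n) (Fin n × Fin n) ℂ) (i j : Fin n × Fin n),
      G M i j = M (j.1, i.1) (j.2, i.2) := by
    intro M i j
    refine entry_eq n G (fun a b => (a.2, b.2)) (fun a b => (a.1, b.1)) ?_ ?_ M i j
      (j.1, i.1) (j.2, i.2) rfl rfl
    · intro a b
      have h := hG a.1 b.1 a.2 b.2
      rw [kron_std, kron_std] at h
      exact h
    · intro a b a' b' h1 h2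
      simp only [Prod.mk.injEq] at h1 h2
      exact ⟨Prod.ext h2.1 h1.1, Prod.ext h2.2 h1.2⟩
  ext i j
  simp only [conjTranspose_apply, hG', mul_apply, hF']
  rw [star_sum]
  refine Fintype.sum_equiv (Equiv.prodComm (Fin n) (Fin n)) _ _ ?_
  intro k
  simp only [Equiv.prodComm_apply, Prod.swap, conjTranspose_apply]
  rw [star_mul']
end

section
/- Let G = ℤ/kℤ and let f : G → ℂ be a nonzero function with discrete Fourier transform f̂(χ) = (1/√k) Σ_{g∈G} f(g) χ(g)̄ for characters χ of G. Then |supp(f)| · |supp(f̂)| ≥ k (Donoho–Stark uncertainty principle for cyclic groups), which is the specialization of the subfactor Donoho–Stark inequality S(x)S(F(x)) ≥ κ₀²/[A:B]₀ to the inclusion arising from the ℤ_k-action on the noncommutative torus, where κ₀ = 1/√k-normalized traces give S(x) = |supp|/k. -/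
open Finset Complex

theorem stmt18_fhat_eq (k : ℕ) [NeZero k] (f : ZMod k → ℂ) (g : ZMod k) :
    (∑ h : ZMod k, f h *
        (starRingEnd ℂ) (Complex.exp (2 * Real.pi * Complex.I * (g.val * h.val : ℕ) / k)))
      = ZMod.dft f g := by
  rw [ZMod.dft_apply]
  refine Finset.sum_congr rfl fun h _ => ?_
  have h1 : (starRingEnd ℂ) (Complex.exp (2 * Real.pi * Complex.I * (g.val * h.val : ℕ) / k))
      = ZMod.stdAddChar (N := k) (-(h * g)) := by
    have h2 : -(h * g) = ((-(g.val * h.val : ℕ) : ℤ) : ZMod k) := by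
      push_cast
      rw [ZMod.natCast_val, ZMod.natCast_val, ZMod.cast_id, ZMod.cast_id]
      ring
    rw [h2, ZMod.stdAddChar_coe, ← Complex.exp_conj]
    congr 1
    simp only [map_div₀, map_mul, map_neg, Complex.conj_I, Complex.conj_natCast,
      Complex.conj_ofReal, map_ofNat]
    push_cast
    ring
  rw [h1, smul_eq_mul, mul_comm]

theorem stmt18_key (k : ℕ) [NeZero k] (f : ZMod k → ℂ) (hf : f ≠ 0) :
    k ≤ (Function.support f).ncard * (Function.support (ZMod.dft f)).ncard := by
  classical
  set F := ZMod.dft f with hF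
  set A : Finset (ZMod k) := univ.filter (fun x => f x ≠ 0) with hA
  set B : Finset (ZMod k) := univ.filter (fun x => F x ≠ 0) with hB
  obtain ⟨h0, hmax⟩ := Finite.exists_max (fun x => ‖f x‖)
  set M : ℝ := ‖f h0‖ with hMdef
  have hM : 0 < M := by
    obtain ⟨x, hx⟩ := Function.ne_iff.1 hf
    exact lt_of_lt_of_le (norm_pos_iff.2 hx) (hmax x)
  have hterm : ∀ (x j : ZMod k), ‖ZMod.stdAddChar (N := k) x • f j‖ = ‖f j‖ := by
    intro x j
    rw [smul_eq_mul, norm_mul, ZMod.stdAddChar_apply]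
    simp only [Circle.norm_coe, one_mul]
  have bound1 : ∀ g, ‖F g‖ ≤ A.card * M := by
    intro g
    rw [hF, ZMod.dft_apply]
    refine le_trans (norm_sum_le _ _) ?_
    calc ∑ j, ‖ZMod.stdAddChar (N := k) (-(j * g)) • f j‖
        = ∑ j, ‖f j‖ := by simp [hterm]
      _ = ∑ j ∈ A, ‖f j‖ := by
          refine (Finset.sum_subset (Finset.subset_univ _) fun x _ hx => ?_).symm
          simp only [hA, mem_filter, mem_univ, true_and, not_not] at hx
          simp [hx]
      _ ≤ ∑ _j ∈ A, M := Finset.sum_le_sum fun j _ => hmax j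
      _ = A.card * M := by rw [Finset.sum_const, nsmul_eq_mul]
  have inv : (k : ℂ) • f h0 = ZMod.dft F (-h0) := by
    rw [hF, ZMod.dft_dft f]
    simp
  have bound2 : (k : ℝ) * M ≤ B.card * (A.card * M) := by
    have h1 : ‖(k : ℂ) • f h0‖ = (k : ℝ) * M := by
      rw [norm_smul]
      simp [hMdef]
    calc (k : ℝ) * M = ‖ZMod.dft F (-h0)‖ := by rw [← inv, h1]
      _ ≤ ∑ j, ‖ZMod.stdAddChar (N := k) (-(j * (-h0))) • F j‖ := by
          rw [ZMod.dft_apply]; exact norm_sum_le _ _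
      _ = ∑ j, ‖F j‖ := by simp [hterm]
      _ = ∑ j ∈ B, ‖F j‖ := by
          refine (Finset.sum_subset (Finset.subset_univ _) fun x _ hx => ?_).symm
          simp only [hB, mem_filter, mem_univ, true_and, not_not] at hx
          simp [hx]
      _ ≤ ∑ _j ∈ B, A.card * M := Finset.sum_le_sum fun j _ => bound1 j
      _ = B.card * (A.card * M) := by rw [Finset.sum_const, nsmul_eq_mul]
  have hk : (k : ℝ) ≤ A.card * B.card :=
    le_of_mul_le_mul_right (by linarith [bound2] : (k : ℝ) * M ≤ (A.card * B.card) * M) hM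
  have hkn : k ≤ A.card * B.card := by exact_mod_cast hk
  have e1 : (Function.support f).ncard = A.card := by
    rw [show Function.support f = ↑A by ext x; simp [hA, Function.mem_support],
      Set.ncard_coe_finset]
  have e2 : (Function.support F).ncard = B.card := by
    rw [show Function.support F = ↑B by ext x; simp [hB, Function.mem_support],
      Set.ncard_coe_finset]
  rw [e1, e2]; exact hkn

/-- Donoho–Stark uncertainty principle for cyclic groups: for any nonzero
`f : ℤ/kℤ → ℂ` with discrete Fourier transform
`f̂(g) = (1/√k) ∑_h f(h) · conj(χ_g(h))`, where `χ_g(h) = e^{2πi·gh/k}` are the characters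
of `ℤ/kℤ`, one has `|supp f| · |supp f̂| ≥ k`. -/
theorem stmt18 (k : ℕ) [NeZero k] (f : ZMod k → ℂ) (hf : f ≠ 0)
    (fhat : ZMod k → ℂ)
    (hfhat : ∀ g : ZMod k, fhat g = (Real.sqrt k : ℂ)⁻¹ *
      ∑ h : ZMod k, f h *
        (starRingEnd ℂ) (Complex.exp (2 * Real.pi * Complex.I * (g.val * h.val : ℕ) / k)) ) :
    k ≤ (Function.support f).ncard * (Function.support fhat).ncard := by
  have hs : ((Real.sqrt k : ℝ) : ℂ)⁻¹ ≠ 0 := by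
    have : (0 : ℝ) < Real.sqrt k := Real.sqrt_pos.2 (by exact_mod_cast Nat.pos_of_ne_zero (NeZero.ne k))
    simp [Complex.ofReal_ne_zero, ne_of_gt this]
  have hsupp : Function.support fhat = Function.support (ZMod.dft f) := by
    ext g
    simp only [Function.mem_support, hfhat g, stmt18_fhat_eq, mul_ne_zero_iff]
    exact ⟨fun h => h.2, fun h => ⟨hs, h⟩⟩
  rw [hsupp]
  exact stmt18_key k f hf
end
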